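/- Let v=(v_1,…,v_n) and p=(p_1,…,p_n) be 0–1 vectors having the same, positive, number of ones. Then there exists a permutation σ of [n] with val σ = v and pos σ = p if and only if for every index i with 1 ≤ i ≤ n, the number of ones among p_1,…,p_i is strictly greater than the number of ones among v_1,…,v_{i-1}. Moreover, in this case there is exactly one 321-avoiding permutation σ of [n] with val σ = v and pos σ = p. -/

import Mathlib

open Finset MvPolynomial

/-- `σ` avoids the pattern 321. -/
def Avoids321 {n : ℕ} (σ : Equiv.Perm (Fin n)) : Prop :=
  ¬ ∃ i j k : Fin n, i < j ∧ j < k ∧ σ k < σ j ∧ σ j < σ i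

instance {n : ℕ} : DecidablePred (Avoids321 (n := n)) := fun σ => by
  unfold Avoids321; infer_instance

/-- The set of 321-avoiding permutations of `{1,…,n}` (modelled on `Fin n`). -/
def Av (n : ℕ) : Finset (Equiv.Perm (Fin n)) := univ.filter Avoids321

/-- The number of inversions of a permutation. -/
def invPerm {n : ℕ} (σ : Equiv.Perm (Fin n)) : ℕ :=
  (univ.filter (fun p : Fin n × Fin n => p.1 < p.2 ∧ σ p.2 < σ p.1)).card

/-- Position `i` is a left-right maximum of `σ`. -/
def IsLRMax {n : ℕ} (σ : Equiv.Perm (Fin n)) (i : Fin n) : Prop :=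
  ∀ j, j ≤ i → σ j ≤ σ i

instance {n : ℕ} (σ : Equiv.Perm (Fin n)) : DecidablePred (IsLRMax σ) := fun i => by
  unfold IsLRMax; infer_instance

/-- The number of left-right maxima of `σ`. -/
def lrm {n : ℕ} (σ : Equiv.Perm (Fin n)) : ℕ := (univ.filter (IsLRMax σ)).card

/-- The number of fixed points of `σ`. -/
def fixPerm {n : ℕ} (σ : Equiv.Perm (Fin n)) : ℕ := (univ.filter (fun i => σ i = i)).card

/-- The number of excedances of `σ`. -/
def excPerm {n : ℕ} (σ : Equiv.Perm (Fin n)) : ℕ := (univ.filter (fun i => i < σ i)).card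

/-- The descent set of `σ`: `i` is in it iff `σ` descends from position `i+1` to `i+2`
(0-based index `i` corresponds to the 1-based descent position `i+1`). -/
def DesPerm {n : ℕ} (σ : Equiv.Perm (Fin n)) : Finset (Fin n) :=
  univ.filter (fun i => ∃ h : i.val + 1 < n, σ ⟨i.val + 1, h⟩ < σ i)

/-- The number of descents of `σ`. -/
def desPerm {n : ℕ} (σ : Equiv.Perm (Fin n)) : ℕ := (DesPerm σ).card

/-- The major index of `σ` (descents at 1-based positions). -/
def majPerm {n : ℕ} (σ : Equiv.Perm (Fin n)) : ℕ := ∑ i ∈ DesPerm σ, (i.val + 1)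

/-- Number of `true` letters among the first `i` letters of the word `P`. -/
def UpCt {m : ℕ} (P : Fin m → Bool) (i : ℕ) : ℕ :=
  (univ.filter (fun j : Fin m => j.val < i ∧ P j = true)).card

/-- Number of `false` letters among the first `i` letters of the word `P`. -/
def DownCt {m : ℕ} (P : Fin m → Bool) (i : ℕ) : ℕ :=
  (univ.filter (fun j : Fin m => j.val < i ∧ P j = false)).card

/-- A word (with `true` = U, `false` = D) is a Dyck word: every prefix has at least as
many U's as D's, and the total numbers of U's and D's agree. -/
def IsDyck {m : ℕ} (P : Fin m → Bool) : Prop :=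
  (∀ i, i ≤ m → DownCt P i ≤ UpCt P i) ∧ UpCt P m = DownCt P m

instance {m : ℕ} : DecidablePred (IsDyck (m := m)) := fun P => by
  unfold IsDyck; infer_instance

/-- The Dyck paths of semilength `n`, as words of length `2n`. -/
def DyckSet (n : ℕ) : Finset (Fin (2 * n) → Bool) := univ.filter IsDyck

/-- Valleys (descents of the word, i.e. factors `DU`), recorded by the 0-based
index of the `D` step. -/
def Valleys {m : ℕ} (P : Fin m → Bool) : Finset (Fin m) :=
  univ.filter (fun j => P j = false ∧ ∃ h : j.val + 1 < m, P ⟨j.val + 1, h⟩ = true)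

/-- `des` of a path: the number of valleys. -/
def desPath {m : ℕ} (P : Fin m → Bool) : ℕ := (Valleys P).card

/-- `maj` of a path: the sum of the (1-based) positions of the descents. -/
def majPath {m : ℕ} (P : Fin m → Bool) : ℕ := ∑ j ∈ Valleys P, (j.val + 1)

/-- `α(P) = Σ_{i ∈ Des P} |p_i(P)|_U`. -/
def alphaPath {m : ℕ} (P : Fin m → Bool) : ℕ := ∑ j ∈ Valleys P, UpCt P (j.val + 1)

/-- `β(P) = Σ_{i ∈ Des P} |p_i(P)|_D`. -/
def betaPath {m : ℕ} (P : Fin m → Bool) : ℕ := ∑ j ∈ Valleys P, DownCt P (j.val + 1)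

/-- Peaks (factors `UD`), recorded by the 0-based index of the `U` step. -/
def Peaks {m : ℕ} (P : Fin m → Bool) : Finset (Fin m) :=
  univ.filter (fun j => P j = true ∧ ∃ h : j.val + 1 < m, P ⟨j.val + 1, h⟩ = false)

/-- The number of peaks of `P`. -/
def npea {m : ℕ} (P : Fin m → Bool) : ℕ := (Peaks P).card

/-- `spea P = Σ_p (HT(p) - 1)` over peaks `p`, where `HT` is the height of a peak. -/
def spea {m : ℕ} (P : Fin m → Bool) : ℕ :=
  ∑ j ∈ Peaks P, (UpCt P (j.val + 1) - DownCt P (j.val + 1) - 1)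

/-- The height of the path after `i` steps. -/
def htAt {m : ℕ} (P : Fin m → Bool) (i : ℕ) : ℤ := (UpCt P i : ℤ) - (DownCt P i : ℤ)

/-- The start of the tunnel of the valley whose lowest lattice point comes after
`k` steps: the largest `m < k` at which the path has the same height. -/
def tunnelStart {m : ℕ} (P : Fin m → Bool) (k : ℕ) : ℕ :=
  ((Finset.range k).filter (fun j => htAt P j = htAt P k)).sup id

/-- `stun P`: the sum over all valleys of the semilengths of their tunnels. -/
def stun {m : ℕ} (P : Fin m → Bool) : ℕ :=
  ∑ j ∈ Valleys P, (j.val + 1 - tunnelStart P (j.val + 1)) / 2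

/-- A parallelogram polyomino: a pair `(U,V)` of `N/E`-paths (`true` = N, `false` = E)
of the same length, with the same endpoints, such that `U` stays strictly above `V`
except at the endpoints (i.e. every proper nonempty prefix of `U` contains strictly
more `N`-steps than the corresponding prefix of `V`).  As noted by Fürlinger and
Hofbauer, the lower path begins with an `E`-step and the upper path ends with an
`E`-step; this is automatic for `m ≥ 2` and fixes the convention in the degenerate
case `m = 1`. -/
def IsParaPoly {m : ℕ} (U V : Fin m → Bool) : Prop :=
  UpCt U m = UpCt V m ∧ (∀ i, i < m → 1 ≤ i → UpCt V i < UpCt U i) ∧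
    UpCt V 1 = 0 ∧ UpCt U m = UpCt U (m - 1)

instance {m : ℕ} (U V : Fin m → Bool) : Decidable (IsParaPoly U V) := by
  unfold IsParaPoly; infer_instance

/-- The parallelogram polyominoes of size `n`. -/
def ParaSet (n : ℕ) : Finset ((Fin n → Bool) × (Fin n → Bool)) :=
  univ.filter (fun UV => IsParaPoly UV.1 UV.2)

/-- A shortened polyomino: a pair `(P,Q)` of `N/E`-paths of the same length with the
same endpoints such that `P` stays weakly above `Q` and the two paths share no
`N`-steps (an `N`-step is shared exactly when it occurs at the same index with equal
prefix `N`-counts). -/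
def IsShortPoly {m : ℕ} (P Q : Fin m → Bool) : Prop :=
  UpCt P m = UpCt Q m ∧ (∀ i, i ≤ m → UpCt Q i ≤ UpCt P i) ∧
    ∀ j : Fin m, UpCt P j.val = UpCt Q j.val → ¬(P j = true ∧ Q j = true)

instance {m : ℕ} (P Q : Fin m → Bool) : Decidable (IsShortPoly P Q) := by
  unfold IsShortPoly; infer_instance

/-- The shortened polyominoes of size `n`. -/
def ShortSet (n : ℕ) : Finset ((Fin n → Bool) × (Fin n → Bool)) :=
  univ.filter (fun PQ => IsShortPoly PQ.1 PQ.2)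

/-- The sum, over the `E`-steps of a path, of their heights (`N`-count before the step). -/
def eSum {m : ℕ} (W : Fin m → Bool) : ℕ :=
  ∑ j ∈ univ.filter (fun j : Fin m => W j = false), UpCt W j.val

/-- The area between the upper path `U` and the lower path `V`. -/
def areaPoly {m : ℕ} (U V : Fin m → Bool) : ℕ := eSum U - eSum V

/-- The number of columns spanned: the number of `E`-steps of the path. -/
def colPoly {m : ℕ} (W : Fin m → Bool) : ℕ := (univ.filter (fun j : Fin m => W j = false)).card

/-- `I_n(q,t) = Σ_{σ ∈ Av_n(321)} q^{inv σ} t^{lrm σ}`, with `q = X 0`, `t = X 1`. -/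
noncomputable def IPoly (n : ℕ) : MvPolynomial (Fin 2) ℤ :=
  ∑ σ ∈ Av n, X 0 ^ invPerm σ * X 1 ^ lrm σ

/-- `M_n(q,t) = Σ_{σ ∈ Av_n(321)} q^{maj σ} t^{des σ}`, with `q = X 0`, `t = X 1`. -/
noncomputable def MPoly (n : ℕ) : MvPolynomial (Fin 2) ℤ :=
  ∑ σ ∈ Av n, X 0 ^ majPerm σ * X 1 ^ desPerm σ

/-- `I_n(q,t,x) = Σ_{σ ∈ Av_n(321)} q^{inv σ} t^{lrm σ} x^{fix σ}`,
with `q = X 0`, `t = X 1`, `x = X 2`. -/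
noncomputable def IPoly3 (n : ℕ) : MvPolynomial (Fin 3) ℤ :=
  ∑ σ ∈ Av n, X 0 ^ invPerm σ * X 1 ^ lrm σ * X 2 ^ fixPerm σ

/-- `C_n(a,b;t) = Σ_{P ∈ D_n} a^{α(P)} b^{β(P)} t^{des P}`,
with `a = X 0`, `b = X 1`, `t = X 2`. -/
noncomputable def CPoly (n : ℕ) : MvPolynomial (Fin 3) ℤ :=
  ∑ P ∈ DyckSet n, X 0 ^ alphaPath P * X 1 ^ betaPath P * X 2 ^ desPath P

/-- `P_n(q,t) = Σ_{(U,V) ∈ 𝒫_n} q^{area(U,V)} t^{col(U,V)}`, with `q = X 0`, `t = X 1`. -/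
noncomputable def PPoly (n : ℕ) : MvPolynomial (Fin 2) ℤ :=
  ∑ UV ∈ ParaSet n, X 0 ^ areaPoly UV.1 UV.2 * X 1 ^ colPoly UV.1

/-- `I_n(-1,t) = Σ_{σ ∈ Av_n(321)} (-1)^{inv σ} t^{lrm σ} ∈ ℤ[t]`. -/
noncomputable def ISign (n : ℕ) : Polynomial ℤ :=
  ∑ σ ∈ Av n, Polynomial.C ((-1 : ℤ) ^ invPerm σ) * Polynomial.X ^ lrm σ

/-- Substitution `t ↦ q^k t` for polynomials in `q = X 0`, `t = X 1`. -/
noncomputable def subT (k : ℕ) (f : MvPolynomial (Fin 2) ℤ) : MvPolynomial (Fin 2) ℤ :=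
  bind₁ (fun i : Fin 2 => if i = 0 then X 0 else X 0 ^ k * X 1) f

/-- Substitution `t ↦ u` (third variable) for polynomials in `a = X 0`, `b = X 1`, `t = X 2`. -/
noncomputable def subT3 (u : MvPolynomial (Fin 3) ℤ) (f : MvPolynomial (Fin 3) ℤ) :
    MvPolynomial (Fin 3) ℤ :=
  bind₁ (fun i : Fin 3 => if i = 2 then u else X i) f

/-- Substitution `x ↦ 1` (third variable) for polynomials in `q = X 0`, `t = X 1`, `x = X 2`. -/
noncomputable def subX1 (f : MvPolynomial (Fin 3) ℤ) : MvPolynomial (Fin 3) ℤ :=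
  bind₁ (fun i : Fin 3 => if i = 2 then 1 else X i) f

/-- `val σ`: indicator vector of left-right maximum values (`val σ i = 1` iff the value `i`
occurs at a left-right maximum position of `σ`). -/
def valVec {n : ℕ} (σ : Equiv.Perm (Fin n)) (i : Fin n) : ℕ :=
  if ∃ j, IsLRMax σ j ∧ σ j = i then 1 else 0

/-- `pos σ`: indicator vector of left-right maximum positions. -/
def posVec {n : ℕ} (σ : Equiv.Perm (Fin n)) (i : Fin n) : ℕ :=
  if IsLRMax σ i then 1 else 0

section Stmt2Aux

variable {n : ℕ}

private lemma aux_lrmax_ge {σ : Equiv.Perm (Fin n)} {l : Fin n} (h : IsLRMax σ l) :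
    (l : ℕ) ≤ (σ l : ℕ) := by
  have hsub : (Iic l).image σ ⊆ Iic (σ l) := by
    intro x hx
    simp only [mem_image, mem_Iic] at hx ⊢
    obtain ⟨j, hj, rfl⟩ := hx
    exact h j hj
  have hc := Finset.card_le_card hsub
  rw [Finset.card_image_of_injective _ σ.injective, Fin.card_Iic, Fin.card_Iic] at hc
  omega

private lemma aux_rank_lt {P : Fin n → Prop} [DecidablePred P] {b b' : Fin n} (hlt : b < b')
    (hb' : P b') : #((Iic b).filter P) < #((Iic b').filter P) := by
  have hins : insert b' ((Iic b).filter P) ⊆ (Iic b').filter P := by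
    intro x hx
    rcases Finset.mem_insert.mp hx with rfl | hx
    · simp [hb']
    · simp only [mem_filter, mem_Iic] at hx ⊢
      exact ⟨hx.1.trans hlt.le, hx.2⟩
  have hnm : b' ∉ (Iic b).filter P := by
    simp only [mem_filter, mem_Iic, not_and]
    exact fun hle _ => absurd hle (not_le.mpr hlt)
  have := Finset.card_le_card hins
  rw [Finset.card_insert_of_notMem hnm] at this
  omega

private lemma aux_rank_inj {P : Fin n → Prop} [DecidablePred P] {b b' : Fin n} (hb : P b)
    (hb' : P b') (h : #((Iic b).filter P) = #((Iic b').filter P)) : b = b' := by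
  rcases lt_trichotomy b b' with hlt | heq | hlt
  · exact absurd h (Nat.ne_of_lt (aux_rank_lt hlt hb'))
  · exact heq
  · exact absurd h.symm (Nat.ne_of_lt (aux_rank_lt hlt hb))

private lemma aux_rank_eq (σ : Equiv.Perm (Fin n)) (PA PB : Fin n → Prop) [DecidablePred PA]
    [DecidablePred PB] (hmap : ∀ i, PA i ↔ PB (σ i))
    (hmono : ∀ i j, PA i → PA j → i < j → σ i < σ j)
    {i : Fin n} (hi : PA i) :
    #((Iic (σ i)).filter PB) = #((Iic i).filter PA) := by
  apply Finset.card_bij' (fun b _ => σ.symm b) (fun a _ => σ a)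
  · intro b hb
    simp only [mem_filter, mem_Iic] at hb ⊢
    have hPA : PA (σ.symm b) := (hmap _).mpr (by simpa using hb.2)
    refine ⟨?_, hPA⟩
    by_contra hcon
    push_neg at hcon
    have h2 := hmono i (σ.symm b) hi hPA hcon
    simp only [Equiv.apply_symm_apply] at h2
    exact absurd hb.1 (not_le.mpr h2)
  · intro a ha
    simp only [mem_filter, mem_Iic] at ha ⊢
    refine ⟨?_, (hmap a).mp ha.2⟩
    rcases lt_or_eq_of_le ha.1 with h | h
    · exact (hmono a i ha.2 hi h).le
    · rw [h]
  · intro a _; simp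
  · intro b _; simp

private lemma aux_core {v p : Fin n → ℕ}
    (hC : ∀ i : Fin n, #((Iio i).filter fun j => v j = 1) < #((Iic i).filter fun j => p j = 1))
    (σ : Equiv.Perm (Fin n))
    (hmap : ∀ i, p i = 1 ↔ v (σ i) = 1)
    (hmonoA : ∀ i j, p i = 1 → p j = 1 → i < j → σ i < σ j)
    (hmonoC : ∀ i j, ¬p i = 1 → ¬p j = 1 → i < j → σ i < σ j)
    {j : Fin n} (hj : ¬ p j = 1) :
    ∃ a : Fin n, a ≤ j ∧ p a = 1 ∧ σ j < σ a := by
  have hne : ((Iic j).filter fun x => p x = 1).Nonempty := by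
    rw [← Finset.card_pos]
    exact lt_of_le_of_lt (Nat.zero_le _) (hC j)
  obtain ⟨haj, hpa⟩ :
      ((Iic j).filter fun x => p x = 1).max' hne ≤ j ∧
        p (((Iic j).filter fun x => p x = 1).max' hne) = 1 := by
    have := Finset.max'_mem _ hne
    simpa only [mem_filter, mem_Iic] using this
  set a := ((Iic j).filter fun x => p x = 1).max' hne with hadef
  have hmax : ∀ x : Fin n, p x = 1 → x ≤ j → x ≤ a := fun x hx hxj =>
    Finset.le_max' _ x (by simp only [mem_filter, mem_Iic]; exact ⟨hxj, hx⟩)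
  refine ⟨a, haj, hpa, ?_⟩
  have hkj : ((Iic j).filter fun x => p x = 1) = ((Iic a).filter fun x => p x = 1) := by
    ext x
    simp only [mem_filter, mem_Iic]
    exact ⟨fun hx => ⟨hmax x hx.2 hx.1, hx.2⟩, fun hx => ⟨hx.1.trans haj, hx.2⟩⟩
  have hrankB : #((Iic (σ a)).filter fun x => v x = 1) = #((Iic a).filter fun x => p x = 1) :=
    aux_rank_eq σ _ _ hmap hmonoA hpa
  have hvba : v (σ a) = 1 := (hmap a).mp hpa
  -- j ≤ σ a
  have hjs : (j : ℕ) ≤ (σ a : ℕ) := by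
    by_contra hcon
    push_neg at hcon
    have hsub : ((Iic (σ a)).filter fun x => v x = 1) ⊆ ((Iio j).filter fun x => v x = 1) := by
      intro x hx
      simp only [mem_filter, mem_Iic, mem_Iio] at hx ⊢
      refine ⟨lt_of_le_of_lt hx.1 ?_, hx.2⟩
      exact Fin.lt_def.mpr hcon
    have hcc := Finset.card_le_card hsub
    have h2 := hC j
    have hkj' := congrArg Finset.card hkj
    omega
  have hcompj : #((Iic (σ j)).filter fun x => ¬ v x = 1)
      = #((Iic j).filter fun x => ¬ p x = 1) :=
    aux_rank_eq σ (fun x => ¬ p x = 1) (fun x => ¬ v x = 1) (fun i => (hmap i).not) hmonoC hj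
  have hvbj : ¬ v (σ j) = 1 := fun h => hj ((hmap j).mpr h)
  by_contra hcon
  push_neg at hcon
  have hne2 : σ a ≠ σ j := fun h => hvbj (h ▸ hvba)
  have hlt : σ a < σ j := lt_of_le_of_ne hcon hne2
  have hstep := aux_rank_lt (P := fun x => ¬ v x = 1) hlt hvbj
  -- totals
  have t1 := Finset.card_filter_add_card_filter_not (s := Iic (σ a))
    (fun x => v x = 1)
  have t2 := Finset.card_filter_add_card_filter_not (s := Iic j)
    (fun x => p x = 1)
  rw [Fin.card_Iic] at t1 t2
  rw [hrankB, ← hkj] at t1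
  omega

private lemma aux_stats {v p : Fin n → ℕ} (hv : ∀ i, v i ≤ 1) (hp : ∀ i, p i ≤ 1)
    (hC : ∀ i : Fin n, #((Iio i).filter fun j => v j = 1) < #((Iic i).filter fun j => p j = 1))
    (σ : Equiv.Perm (Fin n))
    (hmap : ∀ i, p i = 1 ↔ v (σ i) = 1)
    (hmonoA : ∀ i j, p i = 1 → p j = 1 → i < j → σ i < σ j)
    (hmonoC : ∀ i j, ¬p i = 1 → ¬p j = 1 → i < j → σ i < σ j) :
    posVec σ = p ∧ valVec σ = v ∧ Avoids321 σ := by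
  have hLR : ∀ i : Fin n, IsLRMax σ i ↔ p i = 1 := by
    intro i
    constructor
    · intro hlr
      by_contra hpi
      obtain ⟨a, hai, hpa, hlt⟩ := aux_core hC σ hmap hmonoA hmonoC hpi
      exact absurd (hlr a hai) (not_le.mpr hlt)
    · intro hpi l hl
      by_cases hpl : p l = 1
      · rcases lt_or_eq_of_le hl with h | h
        · exact (hmonoA l i hpl hpi h).le
        · rw [h]
      · obtain ⟨a, hal, hpa, hlt⟩ := aux_core hC σ hmap hmonoA hmonoC hpl
        have hai : a ≤ i := hal.trans hl
        have : σ a ≤ σ i := by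
          rcases lt_or_eq_of_le hai with h | h
          · exact (hmonoA a i hpa hpi h).le
          · rw [h]
        exact hlt.le.trans this
  have hpos : posVec σ = p := by
    funext i
    unfold posVec
    by_cases hpi : p i = 1
    · rw [if_pos ((hLR i).mpr hpi), hpi]
    · rw [if_neg (fun h => hpi ((hLR i).mp h))]
      have := hp i
      omega
  refine ⟨hpos, ?_, ?_⟩
  · funext b
    unfold valVec
    by_cases hb : v b = 1
    · rw [if_pos ⟨σ.symm b, (hLR _).mpr ((hmap _).mpr (by simpa using hb)),
        Equiv.apply_symm_apply _ _⟩, hb]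
    · rw [if_neg, (by have := hv b; omega : v b = 0)]
      rintro ⟨l, hlr, rfl⟩
      exact hb ((hmap l).mp ((hLR l).mp hlr))
  · rintro ⟨i, j, k, hij, hjk, h1, h2⟩
    have hpj : ¬ p j = 1 := by
      intro h
      exact absurd ((hLR j).mpr h i hij.le) (not_le.mpr h2)
    have hpk : ¬ p k = 1 := by
      intro h
      exact absurd ((hLR k).mpr h j hjk.le) (not_le.mpr h1)
    exact absurd (hmonoC j k hpj hpk hjk) (not_lt.mpr h1.le)

private lemma aux_forward (σ : Equiv.Perm (Fin n)) (i : Fin n) :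
    #((Iio i).filter fun b => valVec σ b = 1) < #((Iic i).filter fun j => posVec σ j = 1) := by
  obtain ⟨js, hjsmem, hjsmax⟩ :=
    Finset.exists_max_image (Iic i) (fun x => σ x) ⟨i, mem_Iic.mpr le_rfl⟩
  rw [mem_Iic] at hjsmem
  have hLRjs : IsLRMax σ js := fun l hl => hjsmax l (mem_Iic.mpr (hl.trans hjsmem))
  have hige : (i : ℕ) ≤ (σ js : ℕ) := by
    have hsub : (Iic i).image σ ⊆ Iic (σ js) := by
      intro x hx
      simp only [mem_image, mem_Iic] at hx ⊢
      obtain ⟨a, ha, rfl⟩ := hx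
      exact hjsmax a (mem_Iic.mpr ha)
    have hc := Finset.card_le_card hsub
    rw [Finset.card_image_of_injective _ σ.injective, Fin.card_Iic, Fin.card_Iic] at hc
    omega
  have hjsT : js ∈ (Iic i).filter fun j => posVec σ j = 1 := by
    simp only [mem_filter, mem_Iic, posVec, if_pos hLRjs]
    exact Finset.mem_filter.mpr ⟨mem_Iic.mpr hjsmem, by simp [posVec, hLRjs]⟩
  have hsub : ((Iio i).filter fun b => valVec σ b = 1).image σ.symm
      ⊆ ((Iic i).filter fun j => posVec σ j = 1).erase js := by
    intro x hx
    simp only [mem_image, mem_filter, mem_Iio] at hx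
    obtain ⟨b, ⟨hbi, hbv⟩, rfl⟩ := hx
    have hex : ∃ l, IsLRMax σ l ∧ σ l = b := by
      by_contra hcon
      unfold valVec at hbv
      rw [if_neg hcon] at hbv
      exact absurd hbv (by omega)
    obtain ⟨l, hlr, rfl⟩ := hex
    rw [Equiv.symm_apply_apply]
    have hlb : (l : ℕ) ≤ (σ l : ℕ) := aux_lrmax_ge hlr
    have hlil : l < i := Fin.lt_def.mpr (lt_of_le_of_lt hlb (Fin.lt_def.mp hbi))
    have hlne : l ≠ js := by
      intro h
      rw [h] at hbi
      exact absurd (Fin.lt_def.mp hbi) (not_lt.mpr hige)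
    simp only [Finset.mem_erase, mem_filter, mem_Iic, posVec, if_pos hlr]
    exact ⟨hlne, Finset.mem_filter.mpr ⟨mem_Iic.mpr hlil.le, (if_pos hlr : (if IsLRMax σ l then 1 else 0) = 1)⟩⟩
  have hc1 := Finset.card_le_card hsub
  rw [Finset.card_image_of_injective _ σ.symm.injective] at hc1
  have hc2 := Finset.card_erase_lt_of_mem hjsT
  omega

end Stmt2Aux
section Stmt2Aux2

variable {n : ℕ}

private lemma aux_construct {v p : Fin n → ℕ}
    (hcard : #(univ.filter fun i : Fin n => p i = 1) = #(univ.filter fun i : Fin n => v i = 1)) :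
    ∃ σ : Equiv.Perm (Fin n), (∀ i, p i = 1 ↔ v (σ i) = 1) ∧
      (∀ i j, p i = 1 → p j = 1 → i < j → σ i < σ j) ∧
      (∀ i j, ¬p i = 1 → ¬p j = 1 → i < j → σ i < σ j) := by
  set A : Finset (Fin n) := univ.filter fun i => p i = 1 with hA
  set B : Finset (Fin n) := univ.filter fun i => v i = 1 with hB
  set A' : Finset (Fin n) := univ.filter fun i => ¬ p i = 1 with hA'
  set B' : Finset (Fin n) := univ.filter fun i => ¬ v i = 1 with hB'
  have hcard' : #A' = #B' := by
    have t1 := Finset.card_filter_add_card_filter_not (s := (univ : Finset (Fin n)))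
      (fun i => p i = 1)
    have t2 := Finset.card_filter_add_card_filter_not (s := (univ : Finset (Fin n)))
      (fun i => v i = 1)
    simp only [← hA, ← hB, ← hA', ← hB'] at t1 t2
    omega
  let eA : Fin #A ≃o {x // x ∈ A} := A.orderIsoOfFin rfl
  let eB : Fin #A ≃o {x // x ∈ B} := B.orderIsoOfFin hcard.symm
  let eA' : Fin #A' ≃o {x // x ∈ A'} := A'.orderIsoOfFin rfl
  let eB' : Fin #A' ≃o {x // x ∈ B'} := B'.orderIsoOfFin hcard'.symm
  have hmemA : ∀ x : Fin n, x ∈ A ↔ p x = 1 := by intro x; simp [hA]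
  have hmemB : ∀ x : Fin n, x ∈ B ↔ v x = 1 := by intro x; simp [hB]
  have hmemA' : ∀ x : Fin n, x ∈ A' ↔ ¬ p x = 1 := by intro x; simp [hA']
  have hmemB' : ∀ x : Fin n, x ∈ B' ↔ ¬ v x = 1 := by intro x; simp [hB']
  let e : {x : Fin n // p x = 1} ≃ {x : Fin n // v x = 1} :=
    ((Equiv.subtypeEquivRight hmemA).symm.trans (eA.symm.trans eB).toEquiv).trans
      (Equiv.subtypeEquivRight hmemB)
  let f : {x : Fin n // ¬ p x = 1} ≃ {x : Fin n // ¬ v x = 1} :=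
    ((Equiv.subtypeEquivRight hmemA').symm.trans (eA'.symm.trans eB').toEquiv).trans
      (Equiv.subtypeEquivRight hmemB')
  refine ⟨Equiv.subtypeCongr e f, ?_, ?_, ?_⟩
  · intro i
    by_cases hi : p i = 1
    · have happ : Equiv.subtypeCongr e f i = (e ⟨i, hi⟩ : {x : Fin n // v x = 1}) := by
        simp [Equiv.subtypeCongr, Equiv.sumCompl_symm_apply_of_pos (p := fun x => p x = 1) (a := i) hi]
      rw [happ]
      exact iff_of_true hi (e ⟨i, hi⟩).2
    · have happ : Equiv.subtypeCongr e f i = (f ⟨i, hi⟩ : {x : Fin n // ¬ v x = 1}) := by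
        simp [Equiv.subtypeCongr, Equiv.sumCompl_symm_apply_of_neg (p := fun x => p x = 1) (a := i) hi]
      rw [happ]
      exact iff_of_false hi (f ⟨i, hi⟩).2
  · intro i j hi hj hij
    have happi : Equiv.subtypeCongr e f i = (e ⟨i, hi⟩ : {x : Fin n // v x = 1}) := by
      simp [Equiv.subtypeCongr, Equiv.sumCompl_symm_apply_of_pos (p := fun x => p x = 1) (a := i) hi]
    have happj : Equiv.subtypeCongr e f j = (e ⟨j, hj⟩ : {x : Fin n // v x = 1}) := by
      simp [Equiv.subtypeCongr, Equiv.sumCompl_symm_apply_of_pos (p := fun x => p x = 1) (a := j) hj]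
    rw [happi, happj]
    have : (eA.symm.trans eB) ⟨i, (hmemA i).mpr hi⟩ < (eA.symm.trans eB) ⟨j, (hmemA j).mpr hj⟩ :=
      (eA.symm.trans eB).strictMono (show (⟨i, _⟩ : {x // x ∈ A}) < ⟨j, _⟩ from hij)
    simpa [e, Equiv.subtypeEquivRight_symm_apply] using this
  · intro i j hi hj hij
    have happi : Equiv.subtypeCongr e f i = (f ⟨i, hi⟩ : {x : Fin n // ¬ v x = 1}) := by
      simp [Equiv.subtypeCongr, Equiv.sumCompl_symm_apply_of_neg (p := fun x => p x = 1) (a := i) hi]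
    have happj : Equiv.subtypeCongr e f j = (f ⟨j, hj⟩ : {x : Fin n // ¬ v x = 1}) := by
      simp [Equiv.subtypeCongr, Equiv.sumCompl_symm_apply_of_neg (p := fun x => p x = 1) (a := j) hj]
    rw [happi, happj]
    have : (eA'.symm.trans eB') ⟨i, (hmemA' i).mpr hi⟩ < (eA'.symm.trans eB') ⟨j, (hmemA' j).mpr hj⟩ :=
      (eA'.symm.trans eB').strictMono (show (⟨i, _⟩ : {x // x ∈ A'}) < ⟨j, _⟩ from hij)
    simpa [f, Equiv.subtypeEquivRight_symm_apply] using this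

end Stmt2Aux2
theorem stmt2 {n : ℕ} (v p : Fin n → ℕ) (hv : ∀ i, v i ≤ 1) (hp : ∀ i, p i ≤ 1)
    (heq : ∑ i, v i = ∑ i, p i) (hpos : 0 < ∑ i, p i) :
    ((∃ σ : Equiv.Perm (Fin n), valVec σ = v ∧ posVec σ = p) ↔
      ∀ i : Fin n, ∑ j ∈ Finset.Iio i, v j < ∑ j ∈ Finset.Iic i, p j) ∧
    ((∀ i : Fin n, ∑ j ∈ Finset.Iio i, v j < ∑ j ∈ Finset.Iic i, p j) →
      ∃! σ : Equiv.Perm (Fin n), σ ∈ Av n ∧ valVec σ = v ∧ posVec σ = p) := by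
  classical
  have hsum : ∀ (w : Fin n → ℕ), (∀ i, w i ≤ 1) → ∀ s : Finset (Fin n),
      ∑ j ∈ s, w j = #(s.filter fun j => w j = 1) := by
    intro w hw s
    rw [Finset.card_filter]
    refine Finset.sum_congr rfl fun x _ => ?_
    have := hw x
    by_cases h : w x = 1
    · simp [h]
    · simp [h]; omega
  have hcond : (∀ i : Fin n, ∑ j ∈ Finset.Iio i, v j < ∑ j ∈ Finset.Iic i, p j) ↔
      (∀ i : Fin n, #((Iio i).filter fun j => v j = 1) < #((Iic i).filter fun j => p j = 1)) :=
    forall_congr' fun i => by rw [hsum v hv (Iio i), hsum p hp (Iic i)]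
  have hcard : #(univ.filter fun i : Fin n => p i = 1)
      = #(univ.filter fun i : Fin n => v i = 1) := by
    rw [← hsum p hp, ← hsum v hv]; exact heq.symm
  constructor
  · constructor
    · rintro ⟨σ, rfl, rfl⟩ i
      rw [hsum _ hv, hsum _ hp]
      exact aux_forward σ i
    · intro h
      obtain ⟨σ, hmap, hmonoA, hmonoC⟩ := aux_construct hcard
      obtain ⟨h1, h2, _⟩ := aux_stats hv hp (hcond.mp h) σ hmap hmonoA hmonoC
      exact ⟨σ, h2, h1⟩
  · intro h
    replace h := hcond.mp h
    obtain ⟨σ, hmap, hmonoA, hmonoC⟩ := aux_construct hcard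
    obtain ⟨h1, h2, h3⟩ := aux_stats hv hp h σ hmap hmonoA hmonoC
    refine ⟨σ, ⟨Finset.mem_filter.mpr ⟨Finset.mem_univ _, h3⟩, h2, h1⟩, ?_⟩
    rintro τ ⟨hτAv, hτval, hτpos⟩
    have hτAvoid : Avoids321 τ := (Finset.mem_filter.mp hτAv).2
    have hLRτ : ∀ l, IsLRMax τ l ↔ p l = 1 := by
      intro l
      constructor
      · intro hl; rw [← congrFun hτpos l]; unfold posVec; rw [if_pos hl]
      · intro hl; by_contra hcon
        have hx := congrFun hτpos l
        unfold posVec at hx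
        rw [if_neg hcon] at hx
        omega
    have hvalτ : ∀ b, v b = 1 ↔ ∃ l, IsLRMax τ l ∧ τ l = b := by
      intro b
      constructor
      · intro hb; by_contra hcon
        have hx := congrFun hτval b
        unfold valVec at hx
        rw [if_neg hcon] at hx
        omega
      · intro hex
        have hx := congrFun hτval b
        unfold valVec at hx
        rw [if_pos hex] at hx
        omega
    have hmapτ : ∀ i, p i = 1 ↔ v (τ i) = 1 := by
      intro i
      constructor
      · intro hi
        exact (hvalτ (τ i)).mpr ⟨i, (hLRτ i).mpr hi, rfl⟩
      · intro hi
        obtain ⟨l, hl, hlτ⟩ := (hvalτ (τ i)).mp hi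
        have hli : l = i := τ.injective hlτ
        exact (hLRτ i).mp (hli ▸ hl)
    have hmonoAτ : ∀ i j, p i = 1 → p j = 1 → i < j → τ i < τ j := by
      intro i j hi hj hij
      have hle := (hLRτ j).mpr hj i hij.le
      exact lt_of_le_of_ne hle (fun hh => absurd (τ.injective hh) hij.ne)
    have hmonoCτ : ∀ i j, ¬p i = 1 → ¬p j = 1 → i < j → τ i < τ j := by
      intro i j hi hj hij
      have hni : ¬ IsLRMax τ i := fun hh => hi ((hLRτ i).mp hh)
      unfold IsLRMax at hni
      push_neg at hni
      obtain ⟨g, hgi, hgτ⟩ := hni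
      have hgi' : g < i := lt_of_le_of_ne hgi (fun hh => absurd (hh ▸ hgτ) (lt_irrefl _))
      by_contra hcon
      push_neg at hcon
      have hne : τ j ≠ τ i := fun hh => absurd (τ.injective hh) hij.ne'
      exact hτAvoid ⟨g, i, j, hgi', hij, lt_of_le_of_ne hcon hne, hgτ⟩
    apply Equiv.ext
    intro i
    by_cases hi : p i = 1
    · have r1 := aux_rank_eq τ (fun x => p x = 1) (fun x => v x = 1) hmapτ hmonoAτ hi
      have r2 := aux_rank_eq σ (fun x => p x = 1) (fun x => v x = 1) hmap hmonoA hi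
      exact aux_rank_inj (P := fun x => v x = 1) ((hmapτ i).mp hi) ((hmap i).mp hi)
        (r1.trans r2.symm)
    · have r1 := aux_rank_eq τ (fun x => ¬ p x = 1) (fun x => ¬ v x = 1) (fun x => (hmapτ x).not) hmonoCτ hi
      have r2 := aux_rank_eq σ (fun x => ¬ p x = 1) (fun x => ¬ v x = 1) (fun x => (hmap x).not) hmonoC hi
      exact aux_rank_inj (P := fun x => ¬ v x = 1) ((hmapτ i).not.mp hi) ((hmap i).not.mp hi)
        (r1.trans r2.symm)
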